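/- Let J = {1,…,n−1} and let 𝒥 be the set of (n−1)-element subsets of V. Let E ∈ B_V and suppose there is k > 0 such that for every F′ ∈ B⁰_V and every I ∈ 𝒥, ν^J(π_J(F′ ∩ E)) ≤ k·ν^I(π_I(F′ ∩ E)). Suppose F ⊆ E is of the form F = E ∩ ⋂_{i<ω} F_i with each F_i ∈ B⁰_V. Then for every I ∈ 𝒥, ν^J(π_J(F)) ≤ k·ν^I(π_I(F)). -/

import Mathlib

open FirstOrder MeasureTheory Set
open scoped ENNReal

namespace MeasureAmalgamation

variable (L : FirstOrder.Language) (M : Type*) [L.Structure M]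

/-- `𝓜` is ℵ₁-saturated: every countable finitely satisfiable set of `L`-formulas in one
free variable with parameters from `M` is realized in `M`. -/
def Aleph1Saturated : Prop :=
  ∀ S : Set (L.Formula (M ⊕ Fin 1)), S.Countable →
    (∀ T : Finset (L.Formula (M ⊕ Fin 1)), ↑T ⊆ S →
      ∃ a : M, ∀ φ ∈ T, φ.Realize (Sum.elim id fun _ => a)) →
    ∃ a : M, ∀ φ ∈ S, φ.Realize (Sum.elim id fun _ => a)

/-- The σ-algebra `B_α` generated by the Boolean algebra `B⁰_α` of parameter-definable
subsets of `M^α`. -/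
def defSigma (α : Type*) : MeasurableSpace (α → M) :=
  MeasurableSpace.generateFrom {s : Set (α → M) | (Set.univ : Set M).Definable L s}

variable (n : ℕ)

/-- The projection `π_I : M^V → M^I`. -/
def proj (I : Finset (Fin n)) (x : Fin n → M) : ↥I → M := fun i => x ↑i

/-- The Boolean algebra `B⁰_{V,I}` generated by preimages under `π_I` of sets in `B⁰_I`. -/
def cylDef (I : Finset (Fin n)) : Set (Set (Fin n → M)) :=
  {s | ∃ t : Set (↥I → M), (Set.univ : Set M).Definable L t ∧ s = proj M n I ⁻¹' t}

/-- The σ-algebra `B_{V,I}` generated by `B⁰_{V,I}`. -/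
def cylSigma (I : Finset (Fin n)) : MeasurableSpace (Fin n → M) :=
  MeasurableSpace.generateFrom (cylDef L M n I)

/-- The push-forward measure `ν^I` of `ν = ν^V` under `π_I`. -/
noncomputable def nuI (ν : @Measure (Fin n → M) (defSigma L M (Fin n)))
    (I : Finset (Fin n)) : @Measure (↥I → M) (defSigma L M ↥I) :=
  @Measure.map _ _ (defSigma L M (Fin n)) (defSigma L M ↥I) (proj M n I) ν

/-- Combining a `W`-tuple and a `(V ∖ W)`-tuple into a `V`-tuple. -/
def glue (W : Finset (Fin n)) (x : ↥W → M) (y : ↥(Wᶜ) → M) : Fin n → M :=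
  fun i => if h : i ∈ W then x ⟨i, h⟩ else y ⟨i, Finset.mem_compl.mpr h⟩

/-- The Definability condition: for all `W ⊆ V` and `B ∈ B_V`, the function
`x_W ↦ ν^{V∖W}(B(x_W))` is `B_W`-measurable. -/
def DefinabilityCond (ν : @Measure (Fin n → M) (defSigma L M (Fin n))) : Prop :=
  ∀ (W : Finset (Fin n)) (B : Set (Fin n → M)),
    MeasurableSet[defSigma L M (Fin n)] B →
    @Measurable _ _ (defSigma L M ↥W) _
      (fun x : ↥W → M => nuI L M n ν Wᶜ {y : ↥(Wᶜ) → M | glue M n W x y ∈ B})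

/-- The Fubini condition: for all `W ⊆ V` and essentially bounded `B_V`-measurable
`f : M^V → ℝ`, `∫ f dν^V = ∫∫ f dν^W dν^{V∖W}`. -/
def FubiniCond (ν : @Measure (Fin n → M) (defSigma L M (Fin n))) : Prop :=
  ∀ (W : Finset (Fin n)) (f : (Fin n → M) → ℝ),
    @Measurable _ _ (defSigma L M (Fin n)) _ f →
    (∃ C : ℝ, ∀ᵐ x ∂ν, |f x| ≤ C) →
    ∫ x, f x ∂ν =
      ∫ y, (∫ x, f (glue M n W x y) ∂(nuI L M n ν W)) ∂(nuI L M n ν Wᶜ)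

/-- The index set `J = {1,…,n−1}`, i.e. all indices except the last one. -/
def Jset (n : ℕ) (hn : 2 ≤ n) : Finset (Fin n) := {(⟨n - 1, by omega⟩ : Fin n)}ᶜ

/-- **Lemma 2.5(1)**: if `E ∈ B_V` satisfies condition (c) and `F ⊆ E` is a countable
intersection of sets in `B⁰_V` with `E`, then `ν^J(π_J(F)) ≤ k·ν^I(π_I(F))` for every
`(n−1)`-subset `I` of `V`. -/
theorem lemma_intersection
    (L : FirstOrder.Language) (M : Type*) [L.Structure M]
    [Countable (Σ l, L.Functions l)] [Countable (Σ l, L.Relations l)]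
    (hsat : Aleph1Saturated L M)
    (n : ℕ) (hn : 2 ≤ n)
    (ν : @Measure (Fin n → M) (defSigma L M (Fin n)))
    (hprob : ν Set.univ = 1)
    (hdef : DefinabilityCond L M n ν)
    (hfub : FubiniCond L M n ν)
    (E : Set (Fin n → M))
    (hE : MeasurableSet[defSigma L M (Fin n)] E)
    (κ : NNReal) (hκ : 0 < κ)
    (hc : ∀ F' : Set (Fin n → M), (Set.univ : Set M).Definable L F' →
      ∀ I : Finset (Fin n), I.card = n - 1 →
        nuI L M n ν (Jset n hn) (proj M n (Jset n hn) '' (F' ∩ E)) ≤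
          (κ : ℝ≥0∞) * nuI L M n ν I (proj M n I '' (F' ∩ E)))
    (Fseq : ℕ → Set (Fin n → M))
    (hFseq : ∀ i : ℕ, (Set.univ : Set M).Definable L (Fseq i))
    (F : Set (Fin n → M)) (hF : F = E ∩ ⋂ i : ℕ, Fseq i) :
    ∀ I : Finset (Fin n), I.card = n - 1 →
      nuI L M n ν (Jset n hn) (proj M n (Jset n hn) '' F) ≤
        (κ : ℝ≥0∞) * nuI L M n ν I (proj M n I '' F) := by
  intro I hI
  classical
  letI mV : MeasurableSpace (Fin n → M) := defSigma L M (Fin n)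
  letI mI : MeasurableSpace (↥I → M) := defSigma L M ↥I
  letI mJ : MeasurableSpace (↥(Jset n hn) → M) := defSigma L M ↥(Jset n hn)
  set lamI : Measure (↥I → M) := nuI L M n ν I with hlamI
  set lamJ : Measure (↥(Jset n hn) → M) := nuI L M n ν (Jset n hn) with hlamJ
  -- lamI is a finite measure
  have hIfin : lamI Set.univ ≤ 1 := by
    by_cases hAE : AEMeasurable (proj M n I) ν
    · have : lamI Set.univ = ν (proj M n I ⁻¹' Set.univ) := by
        rw [hlamI, nuI]
        exact Measure.map_apply_of_aemeasurable hAE MeasurableSet.univ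
      rw [this, Set.preimage_univ, hprob]
    · rw [hlamI, nuI, Measure.map_of_not_aemeasurable hAE]
      simp
  haveI : IsFiniteMeasure lamI :=
    ⟨lt_of_le_of_lt hIfin (by norm_num)⟩
  -- measurable hull of π_I '' F
  obtain ⟨S₀, hS₀sub, hS₀meas, hS₀eq⟩ := MeasureTheory.exists_measurable_superset lamI (proj M n I '' F)
  -- preimages of definable sets are definable
  have hpre : ∀ {A : Set (↥I → M)}, (Set.univ : Set M).Definable L A →
      (Set.univ : Set M).Definable L (proj M n I ⁻¹' A) := by
    intro A hA
    have := hA.preimage_comp (Subtype.val : ↥I → Fin n)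
    exact this
  -- the cover function
  set g : Set (↥I → M) → ℝ≥0∞ :=
    fun S => if (Set.univ : Set M).Definable L S then lamI S else ∞ with hg
  have hg0 : g ∅ = 0 := by
    rw [hg]; simp [Set.definable_empty]
  set ν' : OuterMeasure (↥I → M) := OuterMeasure.ofFunction g hg0 with hν'
  have hκ0 : (κ : ℝ≥0∞) ≠ 0 := by
    simpa using hκ.ne'
  have hκtop : (κ : ℝ≥0∞) ≠ ∞ := ENNReal.coe_ne_top
  -- per-set bound on the definable algebra
  have hbase : ∀ A : Set (↥I → M),
      lamJ (proj M n (Jset n hn) '' (E ∩ proj M n I ⁻¹' A)) ≤ (κ : ℝ≥0∞) * g A := by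
    intro A
    by_cases hA : (Set.univ : Set M).Definable L A
    · have h2 : proj M n I '' (proj M n I ⁻¹' A ∩ E) ⊆ A := by
        rintro _ ⟨x, ⟨hxA, -⟩, rfl⟩
        exact hxA
      have h3 : lamI (proj M n I '' (proj M n I ⁻¹' A ∩ E)) ≤ lamI A := measure_mono h2
      have h1 := hc (proj M n I ⁻¹' A) (hpre hA) I hI
      simp only [hg]
      rw [if_pos hA, Set.inter_comm E]
      exact h1.trans (mul_le_mul_right h3 _)
    · simp only [hg]
      rw [if_neg hA, ENNReal.mul_top hκ0]
      exact le_top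
  -- the key: lamJ (π_J (E ∩ π_I⁻¹ S)) ≤ κ * ν' S for every S
  have hkey : ∀ S : Set (↥I → M),
      lamJ (proj M n (Jset n hn) '' (E ∩ proj M n I ⁻¹' S)) ≤ (κ : ℝ≥0∞) * ν' S := by
    intro S
    set ρ := lamJ (proj M n (Jset n hn) '' (E ∩ proj M n I ⁻¹' S)) with hρ
    have hcov : ∀ A : ℕ → Set (↥I → M), S ⊆ ⋃ k, A k →
        ρ ≤ (κ : ℝ≥0∞) * ∑' k, g (A k) := by
      intro A hcover
      have hsub : proj M n (Jset n hn) '' (E ∩ proj M n I ⁻¹' S) ⊆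
          ⋃ k, proj M n (Jset n hn) '' (E ∩ proj M n I ⁻¹' A k) := by
        rintro _ ⟨x, ⟨hxE, hxS⟩, rfl⟩
        obtain ⟨k, hk⟩ := Set.mem_iUnion.mp (hcover hxS)
        exact Set.mem_iUnion.mpr ⟨k, ⟨x, ⟨hxE, hk⟩, rfl⟩⟩
      calc ρ ≤ lamJ (⋃ k, proj M n (Jset n hn) '' (E ∩ proj M n I ⁻¹' A k)) :=
              measure_mono hsub
        _ ≤ ∑' k, lamJ (proj M n (Jset n hn) '' (E ∩ proj M n I ⁻¹' A k)) :=
              measure_iUnion_le _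
        _ ≤ ∑' k, (κ : ℝ≥0∞) * g (A k) := ENNReal.tsum_le_tsum fun k => hbase (A k)
        _ = (κ : ℝ≥0∞) * ∑' k, g (A k) := ENNReal.tsum_mul_left
    have hinv : (κ : ℝ≥0∞)⁻¹ * ρ ≤ ν' S := by
      rw [hν', OuterMeasure.ofFunction_apply]
      refine le_iInf fun A => le_iInf fun hA => ?_
      calc (κ : ℝ≥0∞)⁻¹ * ρ ≤ (κ : ℝ≥0∞)⁻¹ * ((κ : ℝ≥0∞) * ∑' k, g (A k)) :=
            mul_le_mul_right (hcov A hA) _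
        _ = ∑' k, g (A k) := by
            rw [← mul_assoc, ENNReal.inv_mul_cancel hκ0 hκtop, one_mul]
    calc ρ = (κ : ℝ≥0∞) * ((κ : ℝ≥0∞)⁻¹ * ρ) := by
          rw [← mul_assoc, ENNReal.mul_inv_cancel hκ0 hκtop, one_mul]
      _ ≤ (κ : ℝ≥0∞) * ν' S := mul_le_mul_right hinv _
  -- ν' agrees with lamI on the σ-algebra
  have hcar : mI ≤ ν'.caratheodory := by
    rw [show mI = defSigma L M ↥I from rfl, defSigma]
    refine MeasurableSpace.generateFrom_le fun A hA => ?_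
    refine OuterMeasure.ofFunction_caratheodory fun t => ?_
    by_cases ht : (Set.univ : Set M).Definable L t
    · have hAm : MeasurableSet[mI] A := MeasurableSpace.measurableSet_generateFrom hA
      simp only [hg]
      rw [Set.diff_eq, if_pos (ht.inter hA), if_pos (ht.inter hA.compl), if_pos ht]
      rw [← Set.diff_eq]
      exact le_of_eq (measure_inter_add_diff₀ t hAm.nullMeasurableSet)
    · simp only [hg]; rw [if_neg ht]; exact le_top
  set m' : Measure (↥I → M) := ν'.toMeasure hcar with hm'
  have hlamIle : ∀ S : Set (↥I → M), lamI S ≤ ν' S := by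
    intro S
    rw [hν', OuterMeasure.ofFunction_apply]
    refine le_iInf fun A => le_iInf fun hA => ?_
    calc lamI S ≤ lamI (⋃ k, A k) := measure_mono hA
      _ ≤ ∑' k, lamI (A k) := measure_iUnion_le _
      _ ≤ ∑' k, g (A k) := by
          refine ENNReal.tsum_le_tsum fun k => ?_
          simp only [hg]
          by_cases h : (Set.univ : Set M).Definable L (A k)
          · rw [if_pos h]
          · rw [if_neg h]; exact le_top
  have hm'eq : m' = lamI := by
    refine (MeasureTheory.ext_of_generate_finite (m0 := mI)
      {s : Set (↥I → M) | (Set.univ : Set M).Definable L s} rfl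
      (fun s hs t ht _ => hs.inter ht) (fun s hs => ?_) ?_).symm
    · -- lamI s = m' s on definable sets
      have hsm : MeasurableSet[mI] s := MeasurableSpace.measurableSet_generateFrom hs
      rw [hm', MeasureTheory.toMeasure_apply ν' hcar hsm]
      refine le_antisymm (hlamIle s) ?_
      refine (OuterMeasure.ofFunction_le s).trans ?_
      simp only [hg]
      rw [if_pos (show (Set.univ : Set M).Definable L s from hs)]
    · rw [hm', MeasureTheory.toMeasure_apply ν' hcar MeasurableSet.univ]
      refine le_antisymm (hlamIle _) ?_
      refine (OuterMeasure.ofFunction_le _).trans ?_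
      simp only [hg]
      rw [if_pos Set.definable_univ]
  -- assemble
  have hFsub : F ⊆ E ∩ proj M n I ⁻¹' S₀ := by
    intro x hx
    refine ⟨?_, hS₀sub ⟨x, hx, rfl⟩⟩
    rw [hF] at hx
    exact hx.1
  calc lamJ (proj M n (Jset n hn) '' F)
      ≤ lamJ (proj M n (Jset n hn) '' (E ∩ proj M n I ⁻¹' S₀)) :=
        measure_mono (Set.image_mono hFsub)
    _ ≤ (κ : ℝ≥0∞) * ν' S₀ := hkey S₀
    _ = (κ : ℝ≥0∞) * lamI S₀ := by
        rw [← hm'eq, hm', ← MeasureTheory.toMeasure_apply ν' hcar hS₀meas]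
    _ = (κ : ℝ≥0∞) * lamI (proj M n I '' F) := by rw [hS₀eq]

end MeasureAmalgamation
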